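/- Let f : [0,∞) → ℝ be defined by f(x) = x·√(α·log(1 + α β² x²)) where α, β > 0. Then the Fenchel conjugate f*(θ) = sup_{x ≥ 0} (θx − f(x)) satisfies f*(θ) ≤ (1/β)·e^{θ²/(2α)} for all θ ≥ 0. -/

import Mathlib

set_option maxHeartbeats 1000000 in
theorem stmt_3 (α β : ℝ) (hα : 0 < α) (hβ : 0 < β)
    (f : ℝ → ℝ) (hf : ∀ x, f x = x * Real.sqrt (α * Real.log (1 + α * β ^ 2 * x ^ 2)))
    (θ : ℝ) (hθ : 0 ≤ θ) :
    (⨆ x : {x : ℝ // 0 ≤ x}, (θ * x.1 - f x.1)) ≤ (1 / β) * Real.exp (θ ^ 2 / (2 * α)) := by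
  have hRHS : 0 ≤ (1 / β) * Real.exp (θ ^ 2 / (2 * α)) :=
    mul_nonneg (by positivity) (Real.exp_pos _).le
  apply ciSup_le
  rintro ⟨x, hx⟩
  simp only [hf]
  have hpos : (0:ℝ) < 1 + α * β ^ 2 * x ^ 2 := by positivity
  set L : ℝ := Real.log (1 + α * β ^ 2 * x ^ 2) with hLdef
  have hL : 0 ≤ L := Real.log_nonneg
    (by nlinarith [mul_nonneg (mul_nonneg hα.le (sq_nonneg β)) (sq_nonneg x)])
  have hexpL : Real.exp L = 1 + α * β ^ 2 * x ^ 2 := Real.exp_log hpos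
  set g : ℝ := Real.sqrt (α * L) with hgdef
  have hg : 0 ≤ g := Real.sqrt_nonneg _
  set sa : ℝ := Real.sqrt α with hsadef
  have hsa : 0 < sa := Real.sqrt_pos.mpr hα
  have hsa2 : sa ^ 2 = α := Real.sq_sqrt hα.le
  set t : ℝ := Real.sqrt L with htdef
  have ht : 0 ≤ t := Real.sqrt_nonneg _
  have ht2 : t ^ 2 = L := Real.sq_sqrt hL
  have hgst : g = sa * t := by rw [hgdef, Real.sqrt_mul hα.le]
  set s : ℝ := θ / sa with hsdef
  have hθs : θ = sa * s := by rw [hsdef, mul_div_assoc', eq_div_iff hsa.ne']; ring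
  clear_value L g sa t s
  clear hLdef hgdef hsadef htdef hsdef hf f
  rcases le_or_gt θ g with hcase | hcase
  · have : θ * x - x * g ≤ 0 := by nlinarith
    linarith
  · have hts : t < s := by
      rw [hgst, hθs] at hcase
      exact lt_of_mul_lt_mul_left hcase hsa.le
    have hθ2 : θ ^ 2 / (2 * α) = s ^ 2 / 2 := by
      rw [hθs, mul_pow, hsa2]; field_simp
    have hxb : x * (sa * β) ≤ Real.exp (L / 2) := by
      have he : (Real.exp (L / 2)) ^ 2 = Real.exp L := by
        rw [sq, ← Real.exp_add]; congr 1; ring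
      have h1 : (x * (sa * β)) ^ 2 ≤ (Real.exp (L / 2)) ^ 2 := by
        rw [he, hexpL]
        nlinarith [hsa2]
      nlinarith [mul_nonneg hx (mul_nonneg hsa.le hβ.le), (Real.exp_pos (L / 2)).le]
    have hkey : s - t ≤ Real.exp ((s ^ 2 - t ^ 2) / 2) := by
      have hw : 0 < s - t := by linarith
      have h1 : (s - t) ^ 2 / 2 ≤ (s ^ 2 - t ^ 2) / 2 := by nlinarith [mul_nonneg ht hw.le]
      have h2 : s - t ≤ 1 + (s - t) ^ 2 / 2 := by nlinarith [sq_nonneg (s - t - 1)]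
      calc s - t ≤ 1 + (s - t) ^ 2 / 2 := h2
        _ ≤ Real.exp ((s - t) ^ 2 / 2) := by
            have := Real.add_one_le_exp ((s - t) ^ 2 / 2); linarith
        _ ≤ Real.exp ((s ^ 2 - t ^ 2) / 2) := Real.exp_le_exp.mpr h1
    have hθg : θ - g = sa * (s - t) := by rw [hθs, hgst]; ring
    have hθg0 : 0 ≤ θ - g := by linarith
    have hstep : θ * x - x * g ≤ (Real.exp (L / 2) / (sa * β)) * (sa * Real.exp ((s ^ 2 - t ^ 2) / 2)) := by
      have hx1 : x ≤ Real.exp (L / 2) / (sa * β) := by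
        rw [le_div_iff₀ (by positivity)]; exact hxb
      have hx2 : θ - g ≤ sa * Real.exp ((s ^ 2 - t ^ 2) / 2) := by
        rw [hθg]
        exact mul_le_mul_of_nonneg_left hkey hsa.le
      have heq : θ * x - x * g = x * (θ - g) := by ring
      rw [heq]
      exact mul_le_mul hx1 hx2 hθg0 (by positivity)
    calc θ * x - x * g ≤ (Real.exp (L / 2) / (sa * β)) * (sa * Real.exp ((s ^ 2 - t ^ 2) / 2)) := hstep
      _ = (1 / β) * (Real.exp (L / 2) * Real.exp ((s ^ 2 - t ^ 2) / 2)) := by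
          field_simp
      _ = (1 / β) * Real.exp (L / 2 + (s ^ 2 - t ^ 2) / 2) := by rw [Real.exp_add]
      _ = (1 / β) * Real.exp (θ ^ 2 / (2 * α)) := by
          rw [hθ2, ht2]; congr 1; ring
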